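/- arXiv:1203.3032 — 5 statements merged into one kernel-verified Lean document; each statement's English description precedes it below -/
import Mathlib

section
/- There exists a semisimple module over a commutative ring that is essentially critically compressible but not critically compressible. -/
/-- `N` is an essential submodule of `M`: it intersects every nonzero submodule nontrivially. -/
def IsEssential (R M : Type*) [Ring R] [AddCommGroup M] [Module R M]
    (N : Submodule R M) : Prop :=
  ∀ L : Submodule R M, L ≠ ⊥ → N ⊓ L ≠ ⊥

/-- `M` is compressible: it embeds in every nonzero submodule. -/
def Compressible (R M : Type*) [Ring R] [AddCommGroup M] [Module R M] : Prop :=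
  ∀ N : Submodule R M, N ≠ ⊥ → ∃ f : M →ₗ[R] N, Function.Injective f

/-- `M` is critically compressible. -/
def CritComp (R M : Type*) [Ring R] [AddCommGroup M] [Module R M] : Prop :=
  Compressible R M ∧
    ∀ N : Submodule R M, N ≠ ⊥ → ¬ ∃ f : M →ₗ[R] (M ⧸ N), Function.Injective f

/-- `M` is essentially compressible: it embeds in every essential submodule. -/
def EssComp (R M : Type*) [Ring R] [AddCommGroup M] [Module R M] : Prop :=
  ∀ N : Submodule R M, IsEssential R M N → ∃ f : M →ₗ[R] N, Function.Injective f

/-- `M` is essentially critically compressible. -/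
def EssCritComp (R M : Type*) [Ring R] [AddCommGroup M] [Module R M] : Prop :=
  EssComp R M ∧
    ∀ N : Submodule R M, N ≠ ⊥ → IsEssential R M N →
      ¬ ∃ f : M →ₗ[R] (M ⧸ N), Function.Injective f

/-- `M` is essentially retractable: `Hom(M, N) ≠ 0` for every essential `N`. -/
def EssRetractable (R M : Type*) [Ring R] [AddCommGroup M] [Module R M] : Prop :=
  ∀ N : Submodule R M, IsEssential R M N → ∃ f : M →ₗ[R] N, f ≠ 0

/-- `M` is uniform: every nonzero submodule is essential. -/
def Uniform (R M : Type*) [Ring R] [AddCommGroup M] [Module R M] : Prop :=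
  ∀ N : Submodule R M, N ≠ ⊥ → IsEssential R M N

/-- `M` is polyform: no nonzero homomorphism from an essential submodule of `M`
to `M` has essential kernel. -/
def Polyform (R M : Type*) [Ring R] [AddCommGroup M] [Module R M] : Prop :=
  ∀ N : Submodule R M, IsEssential R M N → ∀ f : N →ₗ[R] M, f ≠ 0 →
    ¬ IsEssential R N (LinearMap.ker f)

/-- `M` is essentially fully retractable. -/
def EssFullyRetractable (R M : Type*) [Ring R] [AddCommGroup M] [Module R M] : Prop :=
  ∀ N : Submodule R M, N ≠ ⊥ → IsEssential R M N → ∀ f : N →ₗ[R] M, f ≠ 0 →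
    ∃ g : M →ₗ[R] N, g ∘ₗ f ≠ 0

/-- `M` is self-similar: nonzero, and every nonzero submodule is isomorphic to `M`. -/
def SelfSimilar (R M : Type*) [Ring R] [AddCommGroup M] [Module R M] : Prop :=
  (∃ x : M, x ≠ 0) ∧ ∀ N : Submodule R M, N ≠ ⊥ → Nonempty (N ≃ₗ[R] M)


lemma ess_top_of_semisimple {R M : Type*} [Ring R] [AddCommGroup M] [Module R M]
    [IsSemisimpleModule R M] {N : Submodule R M} (h : IsEssential R M N) : N = ⊤ := by
  obtain ⟨L, hL⟩ := exists_isCompl N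
  have : L = ⊥ := by
    by_contra hb
    exact h L hb hL.inf_eq_bot
  rw [← hL.sup_eq_top, this, sup_bot_eq]

theorem stmt2 : ∃ (R : Type) (_ : CommRing R) (M : Type) (_ : AddCommGroup M)
    (_ : Module R M), IsSemisimpleModule R M ∧ EssCritComp R M ∧ ¬ CritComp R M := by
  refine ⟨ZMod 2, inferInstance, ZMod 2 × ZMod 2, inferInstance, inferInstance,
    inferInstance, ⟨?_, ?_⟩, ?_⟩
  · -- EssComp
    intro N hN
    have hNt := ess_top_of_semisimple hN
    subst hNt
    exact ⟨(Submodule.topEquiv (R := ZMod 2) (M := ZMod 2 × ZMod 2)).symm.toLinearMap,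
      (Submodule.topEquiv.symm).injective⟩
  · -- no embedding into quotient by nonzero essential
    rintro N _ hNe ⟨f, hf⟩
    have ht := ess_top_of_semisimple hNe
    subst ht
    have : Subsingleton ((ZMod 2 × ZMod 2) ⧸ (⊤ : Submodule (ZMod 2) (ZMod 2 × ZMod 2))) :=
      Submodule.Quotient.subsingleton_iff.mpr rfl
    have : ((1, 0) : ZMod 2 × ZMod 2) = 0 := hf (Subsingleton.elim _ _)
    simp at this
  · -- not critically compressible: not even compressible
    rintro ⟨hc, -⟩
    set N := LinearMap.range (LinearMap.inl (ZMod 2) (ZMod 2) (ZMod 2)) with hNdef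
    have hN0 : N ≠ ⊥ := by
      intro hb
      have : ((1, 0) : ZMod 2 × ZMod 2) ∈ N := ⟨1, rfl⟩
      rw [hb, Submodule.mem_bot] at this
      simp [Prod.ext_iff] at this
    obtain ⟨f, hf⟩ := hc N hN0
    have hg : Function.Injective (N.subtype.comp f) := N.injective_subtype.comp hf
    have hsurj : Function.Surjective (N.subtype.comp f) :=
      (Finite.injective_iff_surjective).mp hg
    obtain ⟨x, hx⟩ := hsurj (0, 1)
    have hmem : ((0, 1) : ZMod 2 × ZMod 2) ∈ N := hx ▸ (f x).2
    obtain ⟨y, hy⟩ := hmem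
    have : (0 : ZMod 2) = 1 := congrArg Prod.snd hy
    simp at this
end

section
/- Every nonzero essential submodule of an essentially compressible module is essentially compressible. -/
theorem stmt3 (R M : Type*) [Ring R] [AddCommGroup M] [Module R M]
    (h : EssComp R M) (N : Submodule R M) (hN0 : N ≠ ⊥) (hNe : IsEssential R M N) :
    EssComp R N := by
  intro K hK
  -- K' = image of K in M is essential in M
  set K' : Submodule R M := K.map N.subtype with hK'def
  have hK'ess : IsEssential R M K' := by
    intro L hL hbot
    -- N ⊓ L ≠ ⊥
    have hNL : N ⊓ L ≠ ⊥ := hNe L hL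
    -- pull back to N
    obtain ⟨x, hxNL, hx0⟩ := (Submodule.ne_bot_iff _).1 hNL
    have hxN : x ∈ N := hxNL.1
    have hxL : x ∈ L := hxNL.2
    set L' : Submodule R N := L.comap N.subtype with hL'def
    have hL'0 : L' ≠ ⊥ := by
      apply (Submodule.ne_bot_iff _).2
      exact ⟨⟨x, hxN⟩, hxL, by simp [Submodule.mk_eq_zero, hx0]⟩
    have := hK L' hL'0
    obtain ⟨y, hyKL, hy0⟩ := (Submodule.ne_bot_iff _).1 this
    have : (y : M) ∈ K' ⊓ L := ⟨⟨y, hyKL.1, rfl⟩, hyKL.2⟩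
    rw [hbot] at this
    simp only [Submodule.mem_bot] at this
    exact hy0 (Subtype.ext this)
  obtain ⟨g, hg⟩ := h K' hK'ess
  have hinj : Function.Injective N.subtype := Subtype.val_injective
  let e : K ≃ₗ[R] K' := Submodule.equivMapOfInjective N.subtype hinj K
  refine ⟨(e.symm.toLinearMap.comp g).comp N.subtype, ?_⟩
  exact e.symm.injective.comp (hg.comp Subtype.val_injective)
end

section
/- Every nonzero essential submodule of an essentially critically compressible module is essentially critically compressible. -/
private lemma ess_map {R M : Type*} [Ring R] [AddCommGroup M] [Module R M]
    (N : Submodule R M) (hNe : IsEssential R M N) (L : Submodule R N)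
    (hL : IsEssential R N L) : IsEssential R M (L.map N.subtype) := by
  intro K hK
  have h1 : N ⊓ K ≠ ⊥ := hNe K hK
  have h2 : (N ⊓ K).comap N.subtype ≠ ⊥ := by
    intro hb
    apply h1
    rw [eq_bot_iff] at hb ⊢
    rintro x ⟨hxN, hxK⟩
    have : (⟨x, hxN⟩ : N) ∈ (N ⊓ K).comap N.subtype := ⟨hxN, hxK⟩
    have := hb this
    simpa using congrArg N.subtype this
  have h3 := hL _ h2
  rw [Submodule.ne_bot_iff] at h3 ⊢
  obtain ⟨x, ⟨hxL, hxNK⟩, hx0⟩ := h3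
  exact ⟨(x : M), ⟨⟨x, hxL, rfl⟩, hxNK.2⟩, by simpa using hx0⟩

theorem stmt4 (R M : Type*) [Ring R] [AddCommGroup M] [Module R M]
    (h : EssCritComp R M) (N : Submodule R M) (hN0 : N ≠ ⊥) (hNe : IsEssential R M N) :
    EssCritComp R N := by
  constructor
  · intro L hL
    have hL' : IsEssential R M (L.map N.subtype) := ess_map N hNe L hL
    obtain ⟨f, hf⟩ := h.1 _ hL'
    let e := (Submodule.equivMapOfInjective N.subtype N.injective_subtype L).symm
    refine ⟨(e : _ →ₗ[R] L) ∘ₗ f ∘ₗ N.subtype, ?_⟩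
    exact e.injective.comp (hf.comp N.injective_subtype)
  · rintro L hL0 hL ⟨f, hf⟩
    have hL' : IsEssential R M (L.map N.subtype) := ess_map N hNe L hL
    have hL'0 : L.map N.subtype ≠ ⊥ := by
      intro hb
      exact hL0 (Submodule.map_injective_of_injective N.injective_subtype
        (by simpa using hb))
    apply h.2 _ hL'0 hL'
    obtain ⟨g, hg⟩ := h.1 N (by intro K hK; exact hNe K hK)
    have hle : L ≤ (L.map N.subtype).comap N.subtype :=
      fun x hx => ⟨x, hx, rfl⟩
    have hker : L ≤ LinearMap.ker ((L.map N.subtype).mkQ ∘ₗ N.subtype) := by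
      intro x hx
      simp only [LinearMap.mem_ker, LinearMap.comp_apply, Submodule.mkQ_apply,
        Submodule.Quotient.mk_eq_zero]
      exact ⟨x, hx, rfl⟩
    let q : (N ⧸ L) →ₗ[R] (M ⧸ L.map N.subtype) :=
      Submodule.liftQ L ((L.map N.subtype).mkQ ∘ₗ N.subtype) hker
    have hq : Function.Injective q := by
      rw [← LinearMap.ker_eq_bot, Submodule.ker_liftQ_eq_bot]
      intro x hx
      have : (x : M) ∈ L.map N.subtype := by
        simpa [Submodule.Quotient.mk_eq_zero] using hx
      obtain ⟨y, hy, hyx⟩ := this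
      have : y = x := Subtype.ext hyx
      rwa [← this]
    exact ⟨q ∘ₗ f ∘ₗ g, hq.comp (hf.comp hg)⟩
end

section
/- Let M be an essentially retractable uniform module whose endomorphism ring is a domain. Then M is essentially critically compressible if and only if M is polyform. -/
section Aux
variable {R M : Type*} [Ring R] [AddCommGroup M] [Module R M]

lemma aux_nontrivial (h3 : IsDomain (Module.End R M)) : Nontrivial M := by
  by_contra h
  rw [not_nontrivial_iff_subsingleton] at h
  haveI := h3.toNontrivial
  exact not_subsingleton (Module.End R M)
    ⟨fun a b => LinearMap.ext fun x => Subsingleton.elim _ _⟩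

/-- every nonzero endomorphism is injective -/
lemma aux_endo_inj (h1 : EssRetractable R M) (h2 : Uniform R M)
    (h3 : IsDomain (Module.End R M)) (phi : Module.End R M) (hphi : phi ≠ 0) :
    Function.Injective phi := by
  haveI := h3
  rw [← LinearMap.ker_eq_bot]
  by_contra hk
  obtain ⟨psi, hpsi⟩ := h1 _ (h2 _ hk)
  have hne : (LinearMap.ker phi).subtype ∘ₗ psi ≠ 0 := by
    intro h
    apply hpsi
    ext x
    have := congrArg (fun g => g x) h
    simpa [Submodule.coe_eq_zero] using this
  have hcomp : phi * ((LinearMap.ker phi).subtype ∘ₗ psi) = 0 := by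
    ext x
    simpa using LinearMap.mem_ker.mp (psi x).2
  exact mul_ne_zero hphi hne hcomp

/-- nonzero submodules of submodules of a uniform module are essential -/
lemma aux_sub_ess (h2 : Uniform R M) (D : Submodule R M) (P : Submodule R D)
    (hP : P ≠ ⊥) : IsEssential R D P := by
  intro L hL
  rw [Submodule.ne_bot_iff] at hP hL ⊢
  obtain ⟨p, hp, hp0⟩ := hP
  obtain ⟨l, hl, hl0⟩ := hL
  have hPm : P.map D.subtype ≠ ⊥ := by
    rw [Submodule.ne_bot_iff]
    exact ⟨↑p, Submodule.mem_map.mpr ⟨p, hp, rfl⟩, by simpa [Submodule.coe_eq_zero] using hp0⟩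
  have hLm : L.map D.subtype ≠ ⊥ := by
    rw [Submodule.ne_bot_iff]
    exact ⟨↑l, Submodule.mem_map.mpr ⟨l, hl, rfl⟩, by simpa [Submodule.coe_eq_zero] using hl0⟩
  have := h2 _ hPm _ hLm
  rw [Submodule.ne_bot_iff] at this
  obtain ⟨x, ⟨hx1, hx2⟩, hx0⟩ := this
  obtain ⟨a, ha, rfl⟩ := Submodule.mem_map.mp hx1
  obtain ⟨b, hb, hba⟩ := Submodule.mem_map.mp hx2
  have hab : b = a := Subtype.ext hba
  subst hab
  exact ⟨b, ⟨ha, hb⟩, by simpa [Submodule.coe_eq_zero] using hx0⟩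

end Aux

theorem stmt15 (R M : Type*) [Ring R] [AddCommGroup M] [Module R M]
    (h1 : EssRetractable R M) (h2 : Uniform R M) (h3 : IsDomain (Module.End R M)) :
    EssCritComp R M ↔ Polyform R M := by
  haveI := aux_nontrivial h3
  constructor
  · -- EssCritComp → Polyform
    intro hc N hN f hf hker
    obtain ⟨x, hx0⟩ := exists_ne (0 : M)
    have hNne : N ≠ ⊥ := by
      have := hN ⊤ ((Submodule.ne_bot_iff _).mpr ⟨x, trivial, hx0⟩)
      simpa using this
    obtain ⟨n, hn, hn0⟩ := (Submodule.ne_bot_iff _).mp hNne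
    have hkerfne : LinearMap.ker f ≠ ⊥ := by
      have := hker ⊤ ((Submodule.ne_bot_iff _).mpr
        ⟨⟨n, hn⟩, trivial, by simpa [Submodule.coe_eq_zero] using hn0⟩)
      simpa using this
    obtain ⟨k, hk, hk0⟩ := (Submodule.ne_bot_iff _).mp hkerfne
    set Kbar : Submodule R M := (LinearMap.ker f).map N.subtype with hKbar
    have hKbarne : Kbar ≠ ⊥ := (Submodule.ne_bot_iff _).mpr
      ⟨↑k, Submodule.mem_map.mpr ⟨k, hk, rfl⟩, by simpa [Submodule.coe_eq_zero] using hk0⟩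
    have hrange : LinearMap.range f ≠ ⊥ := fun h => hf (LinearMap.range_eq_bot.mp h)
    obtain ⟨u, hu⟩ := hc.1 _ (h2 _ hrange)
    set q : N →ₗ[R] M ⧸ Kbar := Kbar.mkQ ∘ₗ N.subtype with hq
    have hkerq : LinearMap.ker q = LinearMap.ker f := by
      rw [hq, LinearMap.ker_comp, Submodule.ker_mkQ, hKbar,
        Submodule.comap_map_eq_of_injective N.injective_subtype]
    set qbar := (LinearMap.ker f).liftQ q hkerq.symm.le with hqbar
    have hqbarinj : Function.Injective qbar := by
      rw [← LinearMap.ker_eq_bot]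
      exact Submodule.ker_liftQ_eq_bot _ _ _ hkerq.le
    set e := f.quotKerEquivRange with he
    set total : M →ₗ[R] M ⧸ Kbar := qbar ∘ₗ (e.symm : _ →ₗ[R] _) ∘ₗ u with htotal
    have hinj : Function.Injective total := by
      rw [htotal]
      simp only [LinearMap.coe_comp, LinearEquiv.coe_coe]
      exact hqbarinj.comp (e.symm.injective.comp hu)
    exact hc.2 Kbar hKbarne (h2 _ hKbarne) ⟨total, hinj⟩
  · -- Polyform → EssCritComp
    intro hp
    constructor
    · intro N hN
      obtain ⟨f, hf⟩ := h1 N hN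
      have hco : N.subtype ∘ₗ f ≠ 0 := by
        intro h
        apply hf
        ext y
        have := congrArg (fun g => g y) h
        simpa [Submodule.coe_eq_zero] using this
      have hinj := aux_endo_inj h1 h2 h3 (N.subtype ∘ₗ f) hco
      rw [LinearMap.coe_comp] at hinj
      exact ⟨f, hinj.of_comp⟩
    · rintro K hKne hKess ⟨g, hg⟩
      set D : Submodule R M := Submodule.comap K.mkQ (LinearMap.range g) with hD
      have hKD : K ≤ D := by
        intro y hy
        simp only [hD, Submodule.mem_comap]
        rw [Submodule.mkQ_apply, Submodule.Quotient.mk_eq_zero K |>.mpr hy]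
        exact zero_mem _
      have hDne : D ≠ ⊥ := fun h => hKne (le_bot_iff.mp (h ▸ hKD))
      set e := LinearEquiv.ofInjective g hg with he
      set p : D →ₗ[R] LinearMap.range g :=
        LinearMap.codRestrict _ (K.mkQ ∘ₗ D.subtype) (fun d => d.2) with hpdef
      set h : D →ₗ[R] M := (e.symm : _ →ₗ[R] _) ∘ₗ p with hh
      have hker : LinearMap.ker h = Submodule.comap D.subtype K := by
        ext d
        simp only [hh, LinearMap.mem_ker, LinearMap.coe_comp, Function.comp_apply,
          LinearEquiv.coe_coe, Submodule.mem_comap]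
        constructor
        · intro hd
          have hp0 : p d = 0 := by
            rwa [LinearEquiv.map_eq_zero_iff] at hd
          have hmk : K.mkQ (d : M) = 0 := by
            have := congrArg (Subtype.val) hp0
            exact this
          rw [Submodule.mkQ_apply, Submodule.Quotient.mk_eq_zero] at hmk
          exact hmk
        · intro hd
          have hp0 : p d = 0 := by
            apply Subtype.ext
            show K.mkQ (d : M) = 0
            rw [Submodule.mkQ_apply, Submodule.Quotient.mk_eq_zero]
            exact hd
          rw [hp0, map_zero]
      obtain ⟨kk, hkk, hkk0⟩ := (Submodule.ne_bot_iff _).mp hKne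
      have hkerne : Submodule.comap D.subtype K ≠ ⊥ := by
        exact (Submodule.ne_bot_iff _).mpr
          ⟨⟨kk, hKD hkk⟩, by simpa [Submodule.mem_comap] using hkk,
            by simpa [Submodule.coe_eq_zero] using hkk0⟩
      obtain ⟨x, hx0⟩ := exists_ne (0 : M)
      obtain ⟨m, hm⟩ := K.mkQ_surjective (g x)
      have hmD : m ∈ D := by
        simp only [hD, Submodule.mem_comap, hm]
        exact ⟨x, rfl⟩
      have hval : h ⟨m, hmD⟩ = x := by
        apply e.injective
        rw [hh]
        simp only [LinearMap.coe_comp, Function.comp_apply, LinearEquiv.coe_coe,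
          LinearEquiv.apply_symm_apply]
        apply Subtype.ext
        simp only [hpdef, LinearMap.codRestrict_apply, LinearMap.comp_apply,
          Submodule.subtype_apply, hm, he, LinearEquiv.ofInjective_apply]
        exact hm
      have hne : h ≠ 0 := by
        intro h0
        rw [h0] at hval
        exact hx0 (by simpa using hval.symm)
      refine hp D (h2 D hDne) h hne ?_
      rw [hker]
      exact aux_sub_ess h2 D _ hkerne
end

section
/- Let M be a polyform uniform module that is essentially retractable. Then M is essentially fully retractable. -/
lemma uniform_sub (R M : Type*) [Ring R] [AddCommGroup M] [Module R M]
    (h2 : Uniform R M) (N : Submodule R M) (K : Submodule R N) (hK : K ≠ ⊥) :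
    IsEssential R N K := by
  intro L hL hKL
  obtain ⟨k, hk, hk0⟩ := Submodule.ne_bot_iff K |>.1 hK
  obtain ⟨l, hl, hl0⟩ := Submodule.ne_bot_iff L |>.1 hL
  have hmapK : Submodule.map N.subtype K ≠ ⊥ := by
    rw [Submodule.ne_bot_iff]
    exact ⟨(k : M), ⟨k, hk, rfl⟩, fun h => hk0 (Subtype.coe_injective h)⟩
  have hmapL : Submodule.map N.subtype L ≠ ⊥ := by
    rw [Submodule.ne_bot_iff]
    exact ⟨(l : M), ⟨l, hl, rfl⟩, fun h => hl0 (Subtype.coe_injective h)⟩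
  have hess := h2 _ hmapK _ hmapL
  apply hess
  rw [Submodule.eq_bot_iff]
  rintro x ⟨⟨a, ha, rfl⟩, ⟨b, hb, hba⟩⟩
  have hab : b = a := Subtype.coe_injective hba
  subst hab
  have : b ∈ K ⊓ L := ⟨ha, hb⟩
  rw [hKL] at this
  simpa using this

lemma monoform (R M : Type*) [Ring R] [AddCommGroup M] [Module R M]
    (h1 : Polyform R M) (h2 : Uniform R M) (N : Submodule R M)
    (hN : IsEssential R M N) (f : N →ₗ[R] M) (hf : f ≠ 0) :
    Function.Injective f := by
  have hker := h1 N hN f hf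
  have : LinearMap.ker f = ⊥ := by
    by_contra h
    exact hker (uniform_sub R M h2 N _ h)
  exact LinearMap.ker_eq_bot.mp this

theorem stmt19 (R M : Type*) [Ring R] [AddCommGroup M] [Module R M]
    (h1 : Polyform R M) (h2 : Uniform R M) (h3 : EssRetractable R M) :
    EssFullyRetractable R M := by
  intro N hNbot hNess f hf
  obtain ⟨g, hg⟩ := h3 N hNess
  refine ⟨g, fun hgf => ?_⟩
  -- g is injective: consider g' := N.subtype ∘ g : M →ₗ M, restricted to ⊤
  set g' : M →ₗ[R] M := N.subtype ∘ₗ g with hg'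
  have htop : IsEssential R M ⊤ := by
    intro L hL
    simpa using hL
  have hg'0 : g' ≠ 0 := by
    intro h0
    apply hg
    ext x
    have : g' x = 0 := by rw [h0]; rfl
    simpa [g'] using this
  set g'' : (⊤ : Submodule R M) →ₗ[R] M := g' ∘ₗ (⊤ : Submodule R M).subtype with hg''
  have hg''0 : g'' ≠ 0 := by
    intro h0
    apply hg'0
    ext x
    have : g'' ⟨x, trivial⟩ = 0 := by rw [h0]; rfl
    simpa [g''] using this
  have hinj'' := monoform R M h1 h2 ⊤ htop g'' hg''0
  have hginj : Function.Injective g := by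
    intro x y hxy
    have : g'' ⟨x, trivial⟩ = g'' ⟨y, trivial⟩ := by
      simp only [g'', g', LinearMap.comp_apply, Submodule.subtype_apply, hxy]
    exact congrArg Subtype.val (hinj'' this)
  -- from g ∘ f = 0 and f ≠ 0, contradiction
  obtain ⟨n, hn⟩ : ∃ n : N, f n ≠ 0 := by
    by_contra h
    push_neg at h
    exact hf (by ext n; exact h n)
  have : g (f n) = 0 := by
    have h0 : (g ∘ₗ f) n = 0 := by rw [hgf]; rfl
    simpa using h0
  have : f n = 0 := by
    apply hginj
    simpa using this
  exact hn this
end
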